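/- Let X be square-integrable and G a sub-σ-algebra. If U, V satisfy E[U|G] = E[V|G] = E[X|G], are conditionally independent given G, and each has marginal law equal to that of some W with E[W] = E[X], then E[UV] − (E[X])² = Var(E[X|G]) and hence 0 ≤ Cov(U,V) ≤ Var(X). -/

import Mathlib

open MeasureTheory ProbabilityTheory

/-- If `E[U|G] = E[V|G] = E[X|G]` a.s., `U` and `V` are conditionally independent given `G`,
and each has the marginal law of some `W` with `E[W] = E[X]`, then
`E[UV] − (E[X])² = Var(E[X|G])`, hence `0 ≤ Cov(U,V) ≤ Var(X)`. -/
theorem cov_eq_var_condexp_and_bounds {Ω : Type*} {F : MeasurableSpace Ω}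
    (μ : Measure Ω) [IsProbabilityMeasure μ]
    (G : MeasurableSpace Ω) (hG : G ≤ F)
    (X U V W : Ω → ℝ) (hX : MemLp X 2 μ)
    (hU : MemLp U 2 μ) (hV : MemLp V 2 μ) (hW : MemLp W 2 μ)
    (hUX : condExp G μ U =ᵐ[μ] condExp G μ X)
    (hVX : condExp G μ V =ᵐ[μ] condExp G μ X)
    (hcondindep : condExp G μ (fun ω => U ω * V ω) =ᵐ[μ]
      fun ω => condExp G μ U ω * condExp G μ V ω)
    (hlawU : @Measure.map Ω ℝ F Real.measurableSpace U μ
      = @Measure.map Ω ℝ F Real.measurableSpace W μ)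
    (hlawV : @Measure.map Ω ℝ F Real.measurableSpace V μ
      = @Measure.map Ω ℝ F Real.measurableSpace W μ)
    (hWX : ∫ ω, W ω ∂μ = ∫ ω, X ω ∂μ) :
    (∫ ω, U ω * V ω ∂μ) - (∫ ω, X ω ∂μ) ^ 2 = variance (condExp G μ X) μ ∧
      0 ≤ (∫ ω, U ω * V ω ∂μ) - (∫ ω, U ω ∂μ) * (∫ ω, V ω ∂μ) ∧
      (∫ ω, U ω * V ω ∂μ) - (∫ ω, U ω ∂μ) * (∫ ω, V ω ∂μ) ≤ variance X μ := by
  have hmul : ∀ {f g : Ω → ℝ}, MemLp f 2 μ → MemLp g 2 μ →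
      Integrable (fun ω => f ω * g ω) μ := by
    intro f g hf hg
    have h : MemLp (f • g) 1 μ :=
      hg.smul hf
    simpa [smul_eq_mul, Pi.mul_def] using memLp_one_iff_integrable.mp h
  have hXi : Integrable X μ := hX.integrable one_le_two
  have hUi : Integrable U μ := hU.integrable one_le_two
  have hVi : Integrable V μ := hV.integrable one_le_two
  have hUVi : Integrable (fun ω => U ω * V ω) μ := hmul hU hV
  set cX := condExp G μ X with hcXdef
  have h1 : condExp G μ (fun ω => U ω * V ω) =ᵐ[μ] fun ω => cX ω ^ 2 := by
    filter_upwards [hcondindep, hUX, hVX] with ω h hu hv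
    rw [h, hu, hv, sq]
  have hEUV : ∫ ω, U ω * V ω ∂μ = ∫ ω, cX ω ^ 2 ∂μ := by
    rw [← integral_condExp (μ := μ) (f := fun ω => U ω * V ω) hG]
    exact integral_congr_ae h1
  have hcXmeas : AEStronglyMeasurable[F] cX μ :=
    (stronglyMeasurable_condExp.mono hG).aestronglyMeasurable
  have hcX2 : MemLp cX 2 μ := by
    have hint : Integrable (fun ω => cX ω ^ 2) μ :=
      (integrable_condExp (f := fun ω => U ω * V ω)).congr h1
    exact (memLp_two_iff_integrable_sq hcXmeas).mpr hint
  have hEX : ∫ ω, cX ω ∂μ = ∫ ω, X ω ∂μ := integral_condExp (μ := μ) (f := X) hG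
  have hEU : ∫ ω, U ω ∂μ = ∫ ω, X ω ∂μ := by
    rw [← integral_condExp (μ := μ) (f := U) hG, integral_congr_ae hUX,
      integral_condExp (μ := μ) (f := X) hG]
  have hEV : ∫ ω, V ω ∂μ = ∫ ω, X ω ∂μ := by
    rw [← integral_condExp (μ := μ) (f := V) hG, integral_congr_ae hVX,
      integral_condExp (μ := μ) (f := X) hG]
  have hvarc : variance cX μ = (∫ ω, cX ω ^ 2 ∂μ) - (∫ ω, cX ω ∂μ) ^ 2 := by
    simp only [variance_eq_sub hcX2, Pi.pow_apply]
  have hvarX : variance X μ = (∫ ω, X ω ^ 2 ∂μ) - (∫ ω, X ω ∂μ) ^ 2 := by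
    simp only [variance_eq_sub hX, Pi.pow_apply]
  -- orthogonality : ∫ cX * X = ∫ cX ^ 2
  have hXcX : Integrable (fun ω => cX ω * X ω) μ := hmul hcX2 hX
  have hAE' : AEStronglyMeasurable[G] cX μ :=
    stronglyMeasurable_condExp.aestronglyMeasurable
  have horth : ∫ ω, cX ω * X ω ∂μ = ∫ ω, cX ω ^ 2 ∂μ := by
    rw [← integral_condExp (μ := μ) (f := fun ω => cX ω * X ω) hG]
    refine integral_congr_ae ?_
    refine (condExp_mul_of_aestronglyMeasurable_left hAE' hXcX hXi).trans ?_
    filter_upwards with ω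
    simp [sq, ← hcXdef]
  have hexpand : ∫ ω, (X ω - cX ω) ^ 2 ∂μ
      = (∫ ω, X ω ^ 2 ∂μ) - ∫ ω, cX ω ^ 2 ∂μ := by
    have hrw : ∀ ω, (X ω - cX ω) ^ 2
        = X ω ^ 2 - 2 * (cX ω * X ω) + cX ω ^ 2 := fun ω => by ring
    have hi2 : Integrable (fun ω => 2 * (cX ω * X ω)) μ := hXcX.const_mul 2
    have hi1 : Integrable (fun ω => X ω ^ 2 - 2 * (cX ω * X ω)) μ :=
      hX.integrable_sq.sub hi2
    simp_rw [hrw]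
    rw [integral_add hi1 hcX2.integrable_sq, integral_sub hX.integrable_sq hi2,
      integral_const_mul, horth]
    ring
  have hle : ∫ ω, cX ω ^ 2 ∂μ ≤ ∫ ω, X ω ^ 2 ∂μ := by
    have h0 : 0 ≤ ∫ ω, (X ω - cX ω) ^ 2 ∂μ :=
      integral_nonneg fun ω => sq_nonneg _
    linarith [hexpand]
  have hvn : 0 ≤ variance cX μ := variance_nonneg _ _
  refine ⟨by rw [hEUV, hvarc, hEX], ?_, ?_⟩
  · rw [hEU, hEV, ← sq]
    have : (∫ ω, U ω * V ω ∂μ) - (∫ ω, X ω ∂μ) ^ 2 = variance cX μ := by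
      rw [hEUV, hvarc, hEX]
    linarith
  · rw [hEU, hEV, ← sq, hvarX]
    linarith [hEUV, hvarc, hEX]
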